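/- Let m ≥ 5 be an integer with gcd(m,3) = 1 and let l be an integer. If |sin(lπ/m)| > sin((π/m)·⌊m/3⌋), then |sin(lπ/m)| · |sin(2lπ/m)| ≤ b_m², where b_m² = max_{0 ≤ j ≤ m−1} |sin(jπ/m)|·(√3 − |sin(jπ/m)|). -/

import Mathlib

open Finset Filter Topology

noncomputable section

/-- `s n` is the number of 1's in the binary expansion of `n`. -/
def s (n : ℕ) : ℕ := (Nat.digits 2 n).count 1

/-- `S m x = ∑_{0 ≤ n < x, m ∣ n} (-1)^(s n)`. -/
def S (m x : ℕ) : ℝ := ∑ n ∈ Finset.range x, if m ∣ n then (-1 : ℝ) ^ (s n) else 0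

/-- `F α N = ∑_{n=0}^{N-1} e^{2πi(αn + s(n)/2)}`. -/
def F (α : ℝ) (N : ℕ) : ℂ :=
  ∑ n ∈ Finset.range N, Complex.exp (2 * Real.pi * Complex.I * ((α : ℂ) * n + (s n : ℂ) / 2))

/-- `bsq m = b_m ^ 2`, defined by cases on `m mod 3`. -/
def bsq (m : ℕ) : ℝ :=
  if m % 3 = 0 then
    Real.sin (Real.pi / 3 * (1 + 3 / m)) * (Real.sqrt 3 - Real.sin (Real.pi / 3 * (1 + 3 / m)))
  else if m % 3 = 1 then
    Real.sin (Real.pi / 3 * (1 - 1 / m)) * (Real.sqrt 3 - Real.sin (Real.pi / 3 * (1 - 1 / m)))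
  else
    Real.sin (Real.pi / 3 * (1 + 1 / m)) * (Real.sqrt 3 - Real.sin (Real.pi / 3 * (1 + 1 / m)))

/-- `b m` is the positive real number with `(b m)^2 = bsq m`. -/
def b (m : ℕ) : ℝ := Real.sqrt (bsq m)

/-- `lam m = λ_m = 1 + log₂ b_m`. -/
def lam (m : ℕ) : ℝ := 1 + Real.logb 2 (b m)

/-- `mu m = μ_m = (2 b_m + 1)/(2 b_m - 1)`. -/
def mu (m : ℕ) : ℝ := (2 * b m + 1) / (2 * b m - 1)

/-- `U m x`: positive integers `≤ x` divisible by `m` and not by 3. -/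
def U (m x : ℕ) : Finset ℕ := (Finset.Icc 1 x).filter (fun n => m ∣ n ∧ ¬ (3 ∣ n))

/-- `V p n`: positive integers `≤ n` whose least prime divisor is `p`. -/
def V (p n : ℕ) : Finset ℕ := (Finset.Icc 1 n).filter (fun j => Nat.minFac j = p)



-- key polynomial inequality: sin θ (1 + 2 cos θ) ≤ √3 for θ ∈ [π/3, π/2]
lemma key1 (sθ cθ : ℝ) (hsc : sθ^2 + cθ^2 = 1) (hc0 : 0 ≤ cθ) (hc : cθ ≤ 1/2) (hs : 0 ≤ sθ) :
    sθ * (1 + 2*cθ) ≤ Real.sqrt 3 := by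
  rw [show sθ * (1+2*cθ) = Real.sqrt ((sθ*(1+2*cθ))^2) from
    (Real.sqrt_sq (by positivity)).symm]
  apply Real.sqrt_le_sqrt
  nlinarith [mul_nonneg (by nlinarith : (0:ℝ) ≤ 1 - 2*cθ)
    (by nlinarith : (0:ℝ) ≤ 2 - 3*cθ^2 - 2*cθ^3)]

-- h(u) = 2u²√(1-u²) decreasing on [√3/2, 1]
lemma hdec (a u : ℝ) (ha : Real.sqrt 3 / 2 ≤ a) (hau : a ≤ u) (hu : u ≤ 1) :
    2*u^2*Real.sqrt (1-u^2) ≤ 2*a^2*Real.sqrt (1-a^2) := by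
  have h3 : (Real.sqrt 3)^2 = 3 := Real.sq_sqrt (by norm_num)
  have hs3 : 0 ≤ Real.sqrt 3 := Real.sqrt_nonneg 3
  have ha2 : 3/4 ≤ a^2 := by nlinarith
  have ha0 : 0 ≤ a := by nlinarith
  have key : ∀ v : ℝ, 0 ≤ v → v ≤ 1 →
      2*v^2*Real.sqrt (1-v^2) = Real.sqrt (4*v^4*(1-v^2)) := by
    intro v hv0 hv1
    rw [show 4*v^4*(1-v^2) = (2*v^2)^2 * (1-v^2) by ring, Real.sqrt_mul (by positivity),
      Real.sqrt_sq (by positivity)]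
  rw [key u (by linarith) hu, key a ha0 (by linarith)]
  apply Real.sqrt_le_sqrt
  have hpq : a^2 ≤ u^2 := by nlinarith
  have hq1 : u^2 ≤ 1 := by nlinarith
  nlinarith [mul_nonneg (sub_nonneg.2 hpq)
    (by nlinarith : (0:ℝ) ≤ u^4 + u^2*a^2 + a^4 - a^2 - u^2)]

lemma abs_sin_add_nat_mul_pi (x : ℝ) (q : ℕ) : |Real.sin (x + q * Real.pi)| = |Real.sin x| := by
  induction q with
  | zero => simp
  | succ n ih =>
    have : x + ((n:ℝ)+1) * Real.pi = (x + n * Real.pi) + Real.pi := by ring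
    rw [Nat.cast_succ, this, Real.sin_add_pi, abs_neg, ih]

/-- reduction: |sin(lπ/m)| = sin(rπ/m) for some natural r with 2r ≤ m (as reals). -/
lemma sin_reduce (m : ℕ) (hm : 0 < m) (l : ℤ) :
    ∃ r : ℕ, 2*(r:ℝ) ≤ m ∧ |Real.sin ((l:ℝ) * Real.pi / m)| = Real.sin ((r:ℝ) * Real.pi / m) := by
  have hm0 : (0:ℝ) < m := by exact_mod_cast hm
  have hπ := Real.pi_pos
  set n := l.natAbs with hn
  have h1 : |Real.sin ((l:ℝ) * Real.pi / m)| = |Real.sin ((n:ℝ) * Real.pi / m)| := by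
    rcases Int.natAbs_eq l with h | h
    · rw [h, Int.cast_natCast]
    · rw [h, Int.cast_neg, Int.cast_natCast,
        show -(n:ℝ) * Real.pi / m = -((n:ℝ) * Real.pi / m) by ring, Real.sin_neg, abs_neg]
  set r0 := n % m with hr0
  have hr0m : r0 < m := Nat.mod_lt _ hm
  obtain ⟨q, hq⟩ : ∃ q, n = m * q + r0 := ⟨n / m, (Nat.div_add_mod n m).symm⟩
  have h2 : (n:ℝ) * Real.pi / m = (r0:ℝ) * Real.pi / m + (q : ℕ) * Real.pi := by
    rw [hq]; push_cast; field_simp; ring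
  have h3 : |Real.sin ((l:ℝ) * Real.pi / m)| = Real.sin ((r0:ℝ) * Real.pi / m) := by
    rw [h1, h2, abs_sin_add_nat_mul_pi, abs_of_nonneg]
    apply Real.sin_nonneg_of_nonneg_of_le_pi
    · positivity
    · rw [div_le_iff₀ hm0]
      have : (r0:ℝ) ≤ m := by exact_mod_cast hr0m.le
      nlinarith
  by_cases hc : 2 * r0 ≤ m
  · exact ⟨r0, by exact_mod_cast hc, h3⟩
  · refine ⟨m - r0, ?_, ?_⟩
    · have : (r0:ℝ) ≤ m := by exact_mod_cast hr0m.le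
      push_cast [Nat.cast_sub hr0m.le]
      have hc' : (m:ℝ) < 2 * r0 := by exact_mod_cast Nat.lt_of_not_le hc
      linarith
    · rw [h3, ← Real.sin_pi_sub]
      congr 1
      push_cast [Nat.cast_sub hr0m.le]
      field_simp

/-- sin(π/3 + 2δ) + sin(π/3 - δ) ≥ √3 for 0 < δ ≤ 0.15 -/
lemma keyB (δ : ℝ) (hδ0 : 0 < δ) (hδ : δ ≤ 0.15) :
    Real.sqrt 3 ≤ Real.sin (Real.pi/3 + 2*δ) + Real.sin (Real.pi/3 - δ) := by
  have h3 : (Real.sqrt 3)^2 = 3 := Real.sq_sqrt (by norm_num)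
  have hs3l : (1.73:ℝ) ≤ Real.sqrt 3 := by
    rw [show (1.73:ℝ) = Real.sqrt (1.73^2) from (Real.sqrt_sq (by norm_num)).symm]
    apply Real.sqrt_le_sqrt; norm_num
  have hs3u : Real.sqrt 3 ≤ 1.74 := by
    rw [Real.sqrt_le_iff]; norm_num
  rw [Real.sin_add, Real.sin_sub, Real.sin_pi_div_three, Real.cos_pi_div_three,
    Real.sin_two_mul, Real.cos_two_mul']
  have hcl : 1 - δ^2/2 ≤ Real.cos δ := Real.one_sub_sq_div_two_le_cos
  have hcu : Real.cos δ ≤ 1 := Real.cos_le_one δ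
  have hsu : Real.sin δ ≤ δ := Real.sin_le hδ0.le
  have hsl : δ - δ^3/4 ≤ Real.sin δ := by
    have := Real.sin_gt_sub_cube hδ0; nlinarith [pow_pos hδ0 3]
  have hs0 : 0 ≤ Real.sin δ := by nlinarith
  have hs2 : Real.sin δ ^ 2 ≤ δ^2 := by nlinarith
  have hA : (0:ℝ) ≤ (1.74 - Real.sqrt 3) * (1 + 2*(Real.sin δ)^2 - Real.cos δ) :=
    mul_nonneg (by linarith) (by nlinarith)
  have hB : (δ - δ^3/4)*(1/2 - δ^2/2) ≤ Real.sin δ * (Real.cos δ - 1/2) :=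
    mul_le_mul hsl (by nlinarith) (by nlinarith) hs0
  have hpyth : Real.sin δ ^ 2 + Real.cos δ ^ 2 = 1 := Real.sin_sq_add_cos_sq δ
  nlinarith [sq_nonneg δ, mul_nonneg hδ0.le (sub_nonneg.2 hδ),
    mul_nonneg (sq_nonneg δ) (sub_nonneg.2 hδ),
    mul_nonneg (mul_nonneg hδ0.le hδ0.le) (mul_nonneg hδ0.le hδ0.le)]

set_option maxHeartbeats 1000000 in
theorem stmt_8 (m : ℕ) (hm : 5 ≤ m) (hgcd : Nat.gcd m 3 = 1) (l : ℤ)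
    (hl : |Real.sin ((l : ℝ) * Real.pi / m)| > Real.sin (Real.pi / m * (⌊(m : ℝ) / 3⌋ : ℤ))) :
    |Real.sin ((l : ℝ) * Real.pi / m)| * |Real.sin (2 * (l : ℝ) * Real.pi / m)| ≤ b m ^ 2 := by
  have hmpos : 0 < m := by omega
  have hm0 : (0:ℝ) < m := by exact_mod_cast hmpos
  have hπ := Real.pi_pos
  have hs3 : (Real.sqrt 3)^2 = 3 := Real.sq_sqrt (by norm_num)
  have hs30 : 0 ≤ Real.sqrt 3 := Real.sqrt_nonneg 3
  have hnd : ¬ (3:ℕ) ∣ m := by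
    intro hd
    have h31 : (3:ℕ) ∣ 1 := hgcd ▸ Nat.dvd_gcd hd dvd_rfl
    omega
  have h3cases : m % 3 = 1 ∨ m % 3 = 2 := by
    have hne : m % 3 ≠ 0 := fun h => hnd (Nat.dvd_of_mod_eq_zero h)
    omega
  set K : ℕ := m / 3 with hKdef
  have hKm : m = 3 * K + m % 3 := by omega
  have hKge1 : 1 ≤ K := by omega
  have hmK1 : (3:ℝ) * K + 1 ≤ m := by
    have : 3 * K + 1 ≤ m := by omega
    exact_mod_cast this
  have hmK2 : (m:ℝ) ≤ 3 * K + 2 := by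
    have : m ≤ 3 * K + 2 := by omega
    exact_mod_cast this
  have hK1 : (1:ℝ) ≤ K := by exact_mod_cast hKge1
  -- floor
  have hfl : (⌊(m : ℝ) / 3⌋ : ℤ) = (K : ℤ) := by
    rw [Int.floor_eq_iff]
    push_cast
    constructor
    · linarith
    · linarith
  rw [hfl] at hl
  push_cast at hl
  -- reduction
  obtain ⟨r, h2r, heq⟩ := sin_reduce m hmpos l
  rw [heq] at hl
  have hrpi2 : (r:ℝ) * Real.pi / m ≤ Real.pi / 2 := by
    rw [div_le_iff₀ hm0]
    nlinarith [mul_nonneg hπ.le (by linarith : (0:ℝ) ≤ (m:ℝ) - 2*r)]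
  have hKpi2 : (K:ℝ) * Real.pi / m ≤ Real.pi / 2 := by
    rw [div_le_iff₀ hm0]
    nlinarith
  have hKr : K < r := by
    by_contra hc
    push_neg at hc
    have hrK : (r:ℝ) ≤ K := by exact_mod_cast hc
    have hmono : (r:ℝ) * Real.pi / m ≤ (K:ℝ) * Real.pi / m := by gcongr
    have hnn : (0:ℝ) ≤ (r:ℝ) * Real.pi / m := by positivity
    have : Real.sin ((r:ℝ) * Real.pi / m) ≤ Real.sin ((K:ℝ) * Real.pi / m) :=
      Real.sin_le_sin_of_le_of_le_pi_div_two (by linarith) hKpi2 hmono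
    have harg : Real.pi / (m:ℝ) * K = (K:ℝ) * Real.pi / m := by ring
    rw [harg] at hl
    linarith
  -- θ := (K+1)π/m
  set θ : ℝ := ((K:ℝ) + 1) * Real.pi / m with hθdef
  have hθpi2 : θ ≤ Real.pi / 2 := by
    rw [hθdef, div_le_iff₀ hm0]
    nlinarith
  have hθpi3 : Real.pi / 3 ≤ θ := by
    rw [hθdef, le_div_iff₀ hm0]
    nlinarith
  have hθ0 : 0 ≤ θ := by positivity
  set u : ℝ := Real.sin ((r:ℝ) * Real.pi / m) with hu
  set a : ℝ := Real.sin θ with ha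
  have hau : a ≤ u := by
    have hKr' : (K:ℝ) + 1 ≤ r := by exact_mod_cast hKr
    have hmono : θ ≤ (r:ℝ) * Real.pi / m := by rw [hθdef]; gcongr
    exact Real.sin_le_sin_of_le_of_le_pi_div_two (by linarith) hrpi2 hmono
  have hu1 : u ≤ 1 := Real.sin_le_one _
  have ha32 : Real.sqrt 3 / 2 ≤ a := by
    rw [ha, ← Real.sin_pi_div_three]
    exact Real.sin_le_sin_of_le_of_le_pi_div_two (by linarith) hθpi2 hθpi3
  set c : ℝ := Real.cos θ with hc
  have hc0 : 0 ≤ c := Real.cos_nonneg_of_neg_pi_div_two_le_of_le (by linarith) hθpi2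
  have hc12 : c ≤ 1/2 := by
    rw [hc, ← Real.cos_pi_div_three]
    exact Real.cos_le_cos_of_nonneg_of_le_pi (by positivity) (by linarith) hθpi3
  have hpyth : a^2 + c^2 = 1 := Real.sin_sq_add_cos_sq θ
  have ha0 : 0 ≤ a := by linarith
  -- product = 2u²√(1-u²)
  have hprod : |Real.sin ((l : ℝ) * Real.pi / m)| * |Real.sin (2 * (l : ℝ) * Real.pi / m)|
      = 2 * u^2 * Real.sqrt (1 - u^2) := by
    have h2x : 2 * (l:ℝ) * Real.pi / m = 2 * ((l:ℝ) * Real.pi / m) := by ring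
    rw [h2x, Real.sin_two_mul, abs_mul, abs_mul, heq, abs_two,
      Real.abs_cos_eq_sqrt_one_sub_sin_sq]
    have : Real.sin ((l:ℝ) * Real.pi / m) ^ 2 = u ^ 2 := by
      rw [← sq_abs, heq]
    rw [this]
    ring
  rw [hprod]
  -- chain
  have hchain1 : 2 * u^2 * Real.sqrt (1 - u^2) ≤ 2 * a^2 * Real.sqrt (1 - a^2) :=
    hdec a u ha32 hau hu1
  have hsqrt_a : Real.sqrt (1 - a^2) = c :=
    (Real.cos_eq_sqrt_one_sub_sin_sq (by linarith) hθpi2).symm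
  have hkey := key1 a c hpyth hc0 hc12 ha0
  have hchain2 : 2 * a^2 * Real.sqrt (1 - a^2) ≤ a * (Real.sqrt 3 - a) := by
    rw [hsqrt_a]
    nlinarith [mul_le_mul_of_nonneg_left hkey ha0]
  -- compare with bsq
  have hbsq : a * (Real.sqrt 3 - a) ≤ bsq m := by
    rcases h3cases with h3 | h3
    · -- m = 3K+1
      have hm7 : 7 ≤ m := by omega
      have hmR : (m:ℝ) = 3 * K + 1 := by
        have : m = 3 * K + 1 := by omega
        exact_mod_cast this
      rw [bsq, if_neg (by omega), if_pos h3]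
      set δ : ℝ := Real.pi / (3 * m) with hδdef
      have hδ0 : 0 < δ := by positivity
      have hδ15 : δ ≤ 0.15 := by
        rw [hδdef, div_le_iff₀ (by positivity)]
        have h7 : (7:ℝ) ≤ m := by exact_mod_cast hm7
        nlinarith [Real.pi_lt_d2]
      have hθδ : θ = Real.pi / 3 + 2 * δ := by
        rw [hθdef, hδdef, hmR]; field_simp; ring
      have hψδ : Real.pi / 3 * (1 - 1 / m) = Real.pi / 3 - δ := by
        rw [hδdef]; field_simp
      have hB := keyB δ hδ0 hδ15
      rw [← hθδ, ← hψδ] at hB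
      set t : ℝ := Real.sin (Real.pi / 3 * (1 - 1/(m:ℝ))) with ht
      have htle : t ≤ Real.sqrt 3 / 2 := by
        rw [ht, ← Real.sin_pi_div_three]
        apply Real.sin_le_sin_of_le_of_le_pi_div_two
        · have : 0 ≤ Real.pi / 3 * (1 - 1/(m:ℝ)) := by
            apply mul_nonneg (by positivity)
            have : (1:ℝ) ≤ m := by linarith
            rw [sub_nonneg, div_le_one hm0]; linarith
          linarith
        · linarith
        · apply mul_le_of_le_one_right (by positivity)
          rw [sub_le_self_iff]; positivity
      have hta : t ≤ a := by linarith
      nlinarith [mul_nonneg (sub_nonneg.2 hta) (sub_nonneg.2 hB)]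
    · -- m = 3K+2
      have hmR : (m:ℝ) = 3 * K + 2 := by
        have : m = 3 * K + 2 := by omega
        exact_mod_cast this
      rw [bsq, if_neg (by omega), if_neg (by omega)]
      have : Real.pi / 3 * (1 + 1 / m) = θ := by
        rw [hθdef, hmR]; field_simp; ring
      rw [this]
  -- conclude
  have hP0 : (0:ℝ) ≤ 2 * u^2 * Real.sqrt (1 - u^2) := by positivity
  have hfinal : 2 * u^2 * Real.sqrt (1 - u^2) ≤ bsq m := by linarith
  have hb2 : b m ^ 2 = bsq m := Real.sq_sqrt (by linarith)
  rw [hb2]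
  exact hfinal
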